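/- Let L be any fragment of LTL_P(Prop) and let 𝒫, 𝒩 be finite sets of actionless non-blocking Kripke structures in T(Prop). If there is a (𝒫,𝒩)-separating L-formula, then there is one of size at most 2^{n+1}, where n := Σ_{K ∈ 𝒫∪𝒩} |Q_K|. -/

import Mathlib

open scoped Classical

/-- Formulas of linear temporal logic `LTL(Prop)`:
`φ ::= p | ¬φ | φ∨φ | φ∧φ | Xφ | Fφ | Gφ | φUφ`. -/
inductive LTL (P : Type) : Type
  | atom : P → LTL P
  | not : LTL P → LTL P
  | or : LTL P → LTL P → LTL P
  | and : LTL P → LTL P → LTL P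
  | next : LTL P → LTL P
  | fut : LTL P → LTL P
  | glob : LTL P → LTL P
  | untl : LTL P → LTL P → LTL P

/-- Satisfaction of an `LTL` formula on an infinite word over `2^P`. -/
def satInf {P : Type} : LTL P → (ℕ → Set P) → Prop
  | .atom p, w => p ∈ w 0
  | .not φ, w => ¬ satInf φ w
  | .or φ ψ, w => satInf φ w ∨ satInf ψ w
  | .and φ ψ, w => satInf φ w ∧ satInf ψ w
  | .next φ, w => satInf φ (fun i => w (i + 1))
  | .fut φ, w => ∃ j, satInf φ (fun i => w (i + j))
  | .glob φ, w => ∀ j, satInf φ (fun i => w (i + j))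
  | .untl φ ψ, w => ∃ j, satInf ψ (fun i => w (i + j)) ∧ ∀ k < j, satInf φ (fun i => w (i + k))

/-- An actionless non-blocking Kripke structure of `T(Prop)`: a finite non-empty
set of states, initial states, a transition function with no blocking state, and
a labelling by propositions. -/
structure NBKripke (P : Type) where
  Q : Type
  [finQ : Fintype Q]
  neQ : Nonempty Q
  I : Set Q
  δ : Q → Set Q
  π : Q → Set P
  nonblocking : ∀ q, (δ q).Nonempty

attribute [instance] NBKripke.finQ

/-- `K ⊨ φ`: every infinite path of `K` from every initial state satisfies `φ`
(via its infinite word of labels). -/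
def KSat {P : Type} (K : NBKripke P) (φ : LTL P) : Prop :=
  ∀ q ∈ K.I, ∀ ρ : ℕ → K.Q, ρ 0 = q → (∀ i, ρ (i + 1) ∈ K.δ (ρ i)) →
    satInf φ (fun i => K.π (ρ i))

/-- Propositional formulas (the sort `φ_P` of `LTL_P(Prop)`):
`φ_P ::= p | ¬φ_P | φ_P∧φ_P | φ_P∨φ_P`. -/
inductive PropFm (P : Type) : Type
  | atom : P → PropFm P
  | not : PropFm P → PropFm P
  | and : PropFm P → PropFm P → PropFm P
  | or : PropFm P → PropFm P → PropFm P

/-- Formulas of the logic `LTL_P(Prop)`: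
`φ ::= φ_P | φ∧φ | φ_P∨φ | Xφ | Gφ | Fφ_P | φUφ_P`. -/
inductive LTLP (P : Type) : Type
  | ofProp : PropFm P → LTLP P
  | and : LTLP P → LTLP P → LTLP P
  | orP : PropFm P → LTLP P → LTLP P
  | next : LTLP P → LTLP P
  | glob : LTLP P → LTLP P
  | futP : PropFm P → LTLP P
  | untlP : LTLP P → PropFm P → LTLP P

/-- Reading a propositional formula as an `LTL` formula. -/
def PropFm.toLTL {P : Type} : PropFm P → LTL P
  | .atom p => .atom p
  | .not φ => .not φ.toLTL
  | .and φ ψ => .and φ.toLTL ψ.toLTL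
  | .or φ ψ => .or φ.toLTL ψ.toLTL

/-- Reading an `LTL_P(Prop)` formula as an `LTL(Prop)` formula. -/
def LTLP.toLTL {P : Type} : LTLP P → LTL P
  | .ofProp a => a.toLTL
  | .and φ ψ => .and φ.toLTL ψ.toLTL
  | .orP a φ => .or a.toLTL φ.toLTL
  | .next φ => .next φ.toLTL
  | .glob φ => .glob φ.toLTL
  | .futP a => .fut a.toLTL
  | .untlP φ a => .untl φ.toLTL a.toLTL

/-- A fragment of `LTL_P(Prop)`: a subset of its operators (atomic propositions;
`¬`, `∧`, `∨` on the propositional sort; `∧`, `∨`, `X`, `G`, `F`, `U` on the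
formula sort). -/
structure LTLPFragment (P : Type) where
  atoms : Set P
  pNot : Prop
  pAnd : Prop
  pOr : Prop
  fAnd : Prop
  fOr : Prop
  fNext : Prop
  fGlob : Prop
  fFut : Prop
  fUntil : Prop

/-- Membership of a propositional formula in a fragment. -/
def LTLPFragment.MemP {P : Type} (F : LTLPFragment P) : PropFm P → Prop
  | .atom p => p ∈ F.atoms
  | .not φ => F.pNot ∧ F.MemP φ
  | .and φ ψ => F.pAnd ∧ F.MemP φ ∧ F.MemP ψ
  | .or φ ψ => F.pOr ∧ F.MemP φ ∧ F.MemP ψ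

/-- Membership of an `LTL_P` formula in a fragment. -/
def LTLPFragment.MemF {P : Type} (F : LTLPFragment P) : LTLP P → Prop
  | .ofProp a => F.MemP a
  | .and φ ψ => F.fAnd ∧ F.MemF φ ∧ F.MemF ψ
  | .orP a φ => F.fOr ∧ F.MemP a ∧ F.MemF φ
  | .next φ => F.fNext ∧ F.MemF φ
  | .glob φ => F.fGlob ∧ F.MemF φ
  | .futP a => F.fFut ∧ F.MemP a
  | .untlP φ a => F.fUntil ∧ F.MemF φ ∧ F.MemP a

/-- The set of subformulas of a propositional formula. -/
def PropSub {P : Type} : PropFm P → Set (PropFm P)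
  | .atom p => {.atom p}
  | .not φ => insert (.not φ) (PropSub φ)
  | .and φ ψ => insert (.and φ ψ) (PropSub φ ∪ PropSub ψ)
  | .or φ ψ => insert (.or φ ψ) (PropSub φ ∪ PropSub ψ)

/-- The set of subformulas (of both sorts) of an `LTL_P` formula. -/
def LTLPSub {P : Type} : LTLP P → Set (PropFm P ⊕ LTLP P)
  | .ofProp a => insert (.inr (.ofProp a)) (Sum.inl '' PropSub a)
  | .and φ ψ => insert (.inr (.and φ ψ)) (LTLPSub φ ∪ LTLPSub ψ)
  | .orP a φ => insert (.inr (.orP a φ)) (Sum.inl '' PropSub a ∪ LTLPSub φ)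
  | .next φ => insert (.inr (.next φ)) (LTLPSub φ)
  | .glob φ => insert (.inr (.glob φ)) (LTLPSub φ)
  | .futP a => insert (.inr (.futP a)) (Sum.inl '' PropSub a)
  | .untlP φ a => insert (.inr (.untlP φ a)) (LTLPSub φ ∪ Sum.inl '' PropSub a)

/-- The (syntax-DAG) size of an `LTL_P` formula: its number of distinct
subformulas. -/
noncomputable def LTLPsz {P : Type} (φ : LTLP P) : ℕ := (LTLPSub φ).ncard

section Aux
variable {P : Type}

/-! ### Propositional evaluation -/

def PropFm.eval : PropFm P → Set P → Prop
  | .atom p, s => p ∈ s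
  | .not a, s => ¬ a.eval s
  | .and a b, s => a.eval s ∧ b.eval s
  | .or a b, s => a.eval s ∨ b.eval s

lemma PropFm.sat_toLTL (a : PropFm P) (w : ℕ → Set P) :
    satInf a.toLTL w ↔ a.eval (w 0) := by
  induction a <;> simp [PropFm.toLTL, satInf, eval, *]

/-! ### Paths -/

def IsPath (K : NBKripke P) (ρ : ℕ → K.Q) : Prop := ∀ i, ρ (i + 1) ∈ K.δ (ρ i)

noncomputable def somePath (K : NBKripke P) (q : K.Q) : ℕ → K.Q :=
  fun n => (fun r => (K.nonblocking r).choose)^[n] q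

lemma somePath_zero (K : NBKripke P) (q : K.Q) : somePath K q 0 = q := rfl

lemma somePath_isPath (K : NBKripke P) (q : K.Q) : IsPath K (somePath K q) := by
  intro i
  have : somePath K q (i + 1) = (fun r => (K.nonblocking r).choose) (somePath K q i) :=
    Function.iterate_succ_apply' _ _ _
  rw [this]
  exact (K.nonblocking _).choose_spec

def splice (ρ : ℕ → α) (m : ℕ) (σ : ℕ → α) : ℕ → α :=
  fun i => if i < m then ρ i else σ (i - m)

lemma splice_lt {ρ : ℕ → α} {m i : ℕ} (σ : ℕ → α) (h : i < m) : splice ρ m σ i = ρ i :=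
  if_pos h

lemma splice_add (ρ : ℕ → α) (m : ℕ) (σ : ℕ → α) (i : ℕ) : splice ρ m σ (i + m) = σ i := by
  simp [splice]

lemma splice_zero (ρ : ℕ → α) (m : ℕ) (σ : ℕ → α) (h : σ 0 = ρ m) :
    splice ρ m σ 0 = ρ 0 := by
  rcases Nat.eq_zero_or_pos m with hm | hm
  · subst hm; simpa [splice] using h
  · exact splice_lt σ hm

lemma splice_isPath {K : NBKripke P} {ρ : ℕ → K.Q} {m : ℕ} {σ : ℕ → K.Q}
    (hρ : IsPath K ρ) (hσ : IsPath K σ) (h : σ 0 = ρ m) : IsPath K (splice ρ m σ) := by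
  intro i
  rcases lt_trichotomy (i + 1) m with h1 | h1 | h1
  · rw [splice_lt σ h1, splice_lt σ (Nat.lt_of_succ_lt h1)]; exact hρ i
  · rw [splice_lt σ (h1 ▸ Nat.lt_succ_self i)]
    have : splice ρ m σ (i + 1) = σ 0 := by simp [splice, h1]
    rw [this, h, ← h1]; exact hρ i
  · have hi : m ≤ i := Nat.lt_succ_iff.mp h1
    have e1 : splice ρ m σ (i + 1) = σ (i - m + 1) := by
      simp [splice, Nat.not_lt.mpr (Nat.le_succ_of_le hi), Nat.succ_sub hi]
    have e2 : splice ρ m σ i = σ (i - m) := by simp [splice, Nat.not_lt.mpr hi]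
    rw [e1, e2]; exact hσ _

lemma shift_isPath {K : NBKripke P} {ρ : ℕ → K.Q} (hρ : IsPath K ρ) (j : ℕ) :
    IsPath K (fun i => ρ (i + j)) := fun i => by
  simpa [Nat.add_right_comm i j 1] using hρ (i + j)

def prepend (q : α) (σ : ℕ → α) : ℕ → α := fun i => Nat.rec q (fun n _ => σ n) i

lemma prepend_zero (q : α) (σ : ℕ → α) : prepend q σ 0 = q := rfl
lemma prepend_succ (q : α) (σ : ℕ → α) (i : ℕ) : prepend q σ (i + 1) = σ i := rfl

lemma prepend_isPath {K : NBKripke P} {q : K.Q} {σ : ℕ → K.Q} (hσ : IsPath K σ)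
    (h : σ 0 ∈ K.δ q) : IsPath K (prepend q σ) := by
  intro i
  cases i with
  | zero => simpa [prepend_zero, prepend_succ] using h
  | succ n => simpa [prepend_succ] using hσ n

end Aux
section Sem
variable {P : Type}

def semP (K : NBKripke P) (a : PropFm P) : Set K.Q := {q | a.eval (K.π q)}

def semF (K : NBKripke P) (φ : LTLP P) : Set K.Q :=
  {q | ∀ ρ : ℕ → K.Q, ρ 0 = q → IsPath K ρ → satInf φ.toLTL (fun i => K.π (ρ i))}

lemma KSat_iff (K : NBKripke P) (φ : LTLP P) : KSat K φ.toLTL ↔ K.I ⊆ semF K φ :=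
  Iff.rfl

/-- Reachability in a Kripke structure. -/
def Reach (K : NBKripke P) (q r : K.Q) : Prop :=
  ∃ ρ : ℕ → K.Q, ρ 0 = q ∧ IsPath K ρ ∧ ∃ m, ρ m = r

lemma semF_ofProp (K : NBKripke P) (a : PropFm P) :
    semF K (.ofProp a) = semP K a := by
  ext q
  constructor
  · intro h
    have := h (somePath K q) (somePath_zero K q) (somePath_isPath K q)
    rw [LTLP.toLTL, PropFm.sat_toLTL] at this
    simpa [somePath_zero, semP] using this
  · intro h ρ h0 _
    rw [LTLP.toLTL, PropFm.sat_toLTL]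
    simpa [h0, semP] using h

lemma semF_and (K : NBKripke P) (φ ψ : LTLP P) :
    semF K (.and φ ψ) = semF K φ ∩ semF K ψ := by
  ext q
  simp only [semF, LTLP.toLTL, satInf, Set.mem_setOf_eq, Set.mem_inter_iff]
  constructor
  · intro h; exact ⟨fun ρ h0 hp => (h ρ h0 hp).1, fun ρ h0 hp => (h ρ h0 hp).2⟩
  · intro h ρ h0 hp; exact ⟨h.1 ρ h0 hp, h.2 ρ h0 hp⟩

lemma semF_orP (K : NBKripke P) (a : PropFm P) (φ : LTLP P) :
    semF K (.orP a φ) = semP K a ∪ semF K φ := by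
  ext q
  simp only [semF, LTLP.toLTL, satInf, Set.mem_setOf_eq, Set.mem_union]
  constructor
  · intro h
    by_cases ha : q ∈ semP K a
    · exact Or.inl ha
    · refine Or.inr fun ρ h0 hp => ?_
      rcases h ρ h0 hp with h' | h'
      · rw [PropFm.sat_toLTL] at h'
        exact absurd (by simpa [h0, semP] using h' : q ∈ semP K a) ha
      · exact h'
  · rintro (ha | hφ) ρ h0 hp
    · exact Or.inl (by rw [PropFm.sat_toLTL]; simpa [h0, semP] using ha)
    · exact Or.inr (hφ ρ h0 hp)

lemma semF_next (K : NBKripke P) (φ : LTLP P) :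
    semF K (.next φ) = {q | ∀ r ∈ K.δ q, r ∈ semF K φ} := by
  ext q
  simp only [semF, LTLP.toLTL, satInf, Set.mem_setOf_eq]
  constructor
  · intro h r hr σ h0 hσ
    have hp : IsPath K (prepend q σ) := prepend_isPath hσ (h0 ▸ hr)
    have := h (prepend q σ) (prepend_zero q σ) hp
    simpa [prepend_succ] using this
  · intro h ρ h0 hp
    have hr : ρ 1 ∈ K.δ q := h0 ▸ hp 0
    exact h (ρ 1) hr (fun i => ρ (i + 1)) (by simp) (shift_isPath hp 1)

lemma semF_glob (K : NBKripke P) (φ : LTLP P) :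
    semF K (.glob φ) = {q | ∀ r, Reach K q r → r ∈ semF K φ} := by
  ext q
  simp only [semF, LTLP.toLTL, satInf, Set.mem_setOf_eq]
  constructor
  · rintro h r ⟨ρ, h0, hp, m, hm⟩ σ hσ0 hσ
    have hsp : IsPath K (splice ρ m σ) := splice_isPath hp hσ (hσ0.trans hm.symm)
    have h00 : splice ρ m σ 0 = q := by
      rw [splice_zero ρ m σ (hσ0.trans hm.symm)]; exact h0
    have := h (splice ρ m σ) h00 hsp m
    simpa [splice_add] using this
  · intro h ρ h0 hp j
    have hr : Reach K q (ρ j) := ⟨ρ, h0, hp, j, rfl⟩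
    exact h (ρ j) hr (fun i => ρ (i + j)) (by simp) (shift_isPath hp j)

lemma semF_futP (K : NBKripke P) (a : PropFm P) :
    semF K (.futP a) = {q | ∀ ρ : ℕ → K.Q, ρ 0 = q → IsPath K ρ →
      ∃ j, ρ j ∈ semP K a} := by
  ext q
  simp only [semF, LTLP.toLTL, satInf, Set.mem_setOf_eq]
  constructor
  · intro h ρ h0 hp
    obtain ⟨j, hj⟩ := h ρ h0 hp
    rw [PropFm.sat_toLTL] at hj
    exact ⟨j, by simpa [semP] using hj⟩
  · intro h ρ h0 hp
    obtain ⟨j, hj⟩ := h ρ h0 hp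
    exact ⟨j, by rw [PropFm.sat_toLTL]; simpa [semP] using hj⟩

lemma semF_untlP (K : NBKripke P) (φ : LTLP P) (a : PropFm P) :
    semF K (.untlP φ a) = {q | ∀ ρ : ℕ → K.Q, ρ 0 = q → IsPath K ρ →
      ∃ j, ρ j ∈ semP K a ∧ ∀ k < j, ρ k ∈ semF K φ} := by
  ext q
  simp only [semF, LTLP.toLTL, satInf, Set.mem_setOf_eq]
  constructor
  · -- hard direction
    intro h ρ h0 hp
    obtain ⟨j, hj, -⟩ := h ρ h0 hp
    rw [PropFm.sat_toLTL] at hj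
    have hex : ∃ j, ρ j ∈ semP K a := ⟨j, by simpa [semP] using hj⟩
    classical
    refine ⟨Nat.find hex, Nat.find_spec hex, ?_⟩
    intro k hk σ hσ0 hσ
    by_contra hbad
    -- splice the bad path in at position k
    have hs0 : σ 0 = ρ k := hσ0
    have hsp : IsPath K (splice ρ k σ) := splice_isPath hp hσ hs0
    have h00 : splice ρ k σ 0 = q := by rw [splice_zero ρ k σ hs0]; exact h0
    obtain ⟨j', hj', hpre⟩ := h (splice ρ k σ) h00 hsp
    rw [PropFm.sat_toLTL] at hj'
    rcases le_or_gt j' k with hle | hgt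
    · -- then ρ j' satisfies a with j' ≤ k < j0 : contradicts minimality
      have hρj' : splice ρ k σ j' = ρ j' := by
        rcases lt_or_eq_of_le hle with h' | h'
        · exact splice_lt σ h'
        · rw [h']
          have he : splice ρ k σ k = σ 0 := by simp [splice]
          rw [he, hs0]
      have hmem : ρ j' ∈ semP K a := by
        simp only [semP, Set.mem_setOf_eq]
        have := hj'
        rw [show (0 : ℕ) + j' = j' from Nat.zero_add j', hρj'] at this
        exact this
      have hfind : Nat.find hex ≤ j' := Nat.find_le hmem
      omega
    · -- then the suffix at k, which is σ, satisfies φ : contradicts hbad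
      have hsat := hpre k hgt
      have hsuf : (fun i => K.π (splice ρ k σ (i + k))) = (fun i => K.π (σ i)) := by
        funext i; rw [splice_add]
      rw [hsuf] at hsat
      exact hbad hsat
  · intro h ρ h0 hp
    obtain ⟨j, hj, hpre⟩ := h ρ h0 hp
    refine ⟨j, ?_, ?_⟩
    · rw [PropFm.sat_toLTL]; simpa [semP] using hj
    · intro k hk
      exact hpre k hk (fun i => ρ (i + k)) (by simp) (shift_isPath hp k)

end Sem
section Syn
variable {P : Type}

def PropFm.size : PropFm P → ℕ
  | .atom _ => 1
  | .not a => a.size + 1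
  | .and a b => a.size + b.size + 1
  | .or a b => a.size + b.size + 1

def LTLP.fsize : LTLP P → ℕ
  | .ofProp a => a.size + 1
  | .and φ ψ => φ.fsize + ψ.fsize + 1
  | .orP a φ => a.size + φ.fsize + 1
  | .next φ => φ.fsize + 1
  | .glob φ => φ.fsize + 1
  | .futP a => a.size + 1
  | .untlP φ a => φ.fsize + a.size + 1

def wsize : PropFm P ⊕ LTLP P → ℕ
  | .inl a => a.size
  | .inr φ => φ.fsize

lemma PropSub_self (a : PropFm P) : a ∈ PropSub a := by
  cases a <;> simp [PropSub]

lemma LTLPSub_self (φ : LTLP P) : Sum.inr φ ∈ LTLPSub φ := by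
  cases φ <;> simp [LTLPSub]

lemma propSub_size {a b : PropFm P} (h : b ∈ PropSub a) : b = a ∨ b.size < a.size := by
  induction a with
  | atom p => simp [PropSub] at h; subst h; left; rfl
  | not c ih =>
    rcases (by simpa [PropSub] using h : b = c.not ∨ b ∈ PropSub c) with h | h
    · exact Or.inl h
    · rcases ih h with rfl | h' <;> right <;> simp [PropFm.size] <;> omega
  | and c d ihc ihd =>
    rcases (by simpa [PropSub] using h : b = c.and d ∨ b ∈ PropSub c ∨ b ∈ PropSub d)
      with h | h | h
    · exact Or.inl h
    · rcases ihc h with rfl | h' <;> right <;> simp [PropFm.size] <;> omega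
    · rcases ihd h with rfl | h' <;> right <;> simp [PropFm.size] <;> omega
  | or c d ihc ihd =>
    rcases (by simpa [PropSub] using h : b = c.or d ∨ b ∈ PropSub c ∨ b ∈ PropSub d)
      with h | h | h
    · exact Or.inl h
    · rcases ihc h with rfl | h' <;> right <;> simp [PropFm.size] <;> omega
    · rcases ihd h with rfl | h' <;> right <;> simp [PropFm.size] <;> omega

lemma ltlpSub_size {x : PropFm P ⊕ LTLP P} {φ : LTLP P} (h : x ∈ LTLPSub φ) :
    x = Sum.inr φ ∨ wsize x < φ.fsize := by
  induction φ with
  | ofProp a =>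
    rcases (by simpa [LTLPSub] using h :
        x = Sum.inr (LTLP.ofProp a) ∨ ∃ b ∈ PropSub a, Sum.inl b = x) with h | ⟨b, hb, rfl⟩
    · exact Or.inl h
    · right; rcases propSub_size hb with rfl | h' <;> simp [wsize, LTLP.fsize] <;> omega
  | and φ ψ ihφ ihψ =>
    rcases (by simpa [LTLPSub] using h :
        x = Sum.inr (φ.and ψ) ∨ x ∈ LTLPSub φ ∨ x ∈ LTLPSub ψ) with h | h | h
    · exact Or.inl h
    · right; rcases ihφ h with rfl | h' <;> simp [wsize, LTLP.fsize] at * <;> omega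
    · right; rcases ihψ h with rfl | h' <;> simp [wsize, LTLP.fsize] at * <;> omega
  | orP a φ ihφ =>
    rcases (by simpa [LTLPSub] using h :
        x = Sum.inr (LTLP.orP a φ) ∨ (∃ b ∈ PropSub a, Sum.inl b = x) ∨ x ∈ LTLPSub φ)
      with h | ⟨b, hb, rfl⟩ | h
    · exact Or.inl h
    · right; rcases propSub_size hb with rfl | h' <;> simp [wsize, LTLP.fsize] <;> omega
    · right; rcases ihφ h with rfl | h' <;> simp [wsize, LTLP.fsize] at * <;> omega
  | next φ ihφ =>
    rcases (by simpa [LTLPSub] using h :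
        x = Sum.inr φ.next ∨ x ∈ LTLPSub φ) with h | h
    · exact Or.inl h
    · right; rcases ihφ h with rfl | h' <;> simp [wsize, LTLP.fsize] at * <;> omega
  | glob φ ihφ =>
    rcases (by simpa [LTLPSub] using h :
        x = Sum.inr φ.glob ∨ x ∈ LTLPSub φ) with h | h
    · exact Or.inl h
    · right; rcases ihφ h with rfl | h' <;> simp [wsize, LTLP.fsize] at * <;> omega
  | futP a =>
    rcases (by simpa [LTLPSub] using h :
        x = Sum.inr (LTLP.futP a) ∨ ∃ b ∈ PropSub a, Sum.inl b = x) with h | ⟨b, hb, rfl⟩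
    · exact Or.inl h
    · right; rcases propSub_size hb with rfl | h' <;> simp [wsize, LTLP.fsize] <;> omega
  | untlP φ a ihφ =>
    rcases (by simpa [LTLPSub] using h :
        x = Sum.inr (φ.untlP a) ∨ x ∈ LTLPSub φ ∨ ∃ b ∈ PropSub a, Sum.inl b = x)
      with h | h | ⟨b, hb, rfl⟩
    · exact Or.inl h
    · right; rcases ihφ h with rfl | h' <;> simp [wsize, LTLP.fsize] at * <;> omega
    · right; rcases propSub_size hb with rfl | h' <;> simp [wsize, LTLP.fsize] <;> omega

end Syn
section Syn2
variable {P : Type}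

lemma propSub_trans {a b : PropFm P} (h : b ∈ PropSub a) : PropSub b ⊆ PropSub a := by
  induction a with
  | atom p => simp [PropSub] at h; subst h; exact fun _ h => h
  | not c ih =>
    rcases (by simpa [PropSub] using h : b = c.not ∨ b ∈ PropSub c) with rfl | h
    · exact fun _ h => h
    · exact fun x hx => Set.mem_insert_of_mem _ (ih h hx)
  | and c d ihc ihd =>
    rcases (by simpa [PropSub] using h : b = c.and d ∨ b ∈ PropSub c ∨ b ∈ PropSub d)
      with rfl | h | h
    · exact fun _ h => h
    · exact (ihc h).trans ((Set.subset_union_left).trans (Set.subset_insert _ _))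
    · exact (ihd h).trans ((Set.subset_union_right).trans (Set.subset_insert _ _))
  | or c d ihc ihd =>
    rcases (by simpa [PropSub] using h : b = c.or d ∨ b ∈ PropSub c ∨ b ∈ PropSub d)
      with rfl | h | h
    · exact fun _ h => h
    · exact (ihc h).trans ((Set.subset_union_left).trans (Set.subset_insert _ _))
    · exact (ihd h).trans ((Set.subset_union_right).trans (Set.subset_insert _ _))

lemma ltlpSub_trans {φ ψ : LTLP P} (h : Sum.inr ψ ∈ LTLPSub φ) :
    LTLPSub ψ ⊆ LTLPSub φ := by
  induction φ with
  | ofProp a =>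
    rcases (by simpa [LTLPSub] using h :
        ψ = LTLP.ofProp a ∨ ∃ b ∈ PropSub a, Sum.inl b = Sum.inr ψ) with rfl | ⟨b, _, hb⟩
    · exact fun _ h => h
    · exact absurd hb (by simp)
  | and φ' ψ' ihφ ihψ =>
    rcases (by simpa [LTLPSub] using h :
        ψ = φ'.and ψ' ∨ Sum.inr ψ ∈ LTLPSub φ' ∨ Sum.inr ψ ∈ LTLPSub ψ') with rfl | h | h
    · exact fun _ h => h
    · exact (ihφ h).trans ((Set.subset_union_left).trans (Set.subset_insert _ _))
    · exact (ihψ h).trans ((Set.subset_union_right).trans (Set.subset_insert _ _))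
  | orP a φ' ihφ =>
    rcases (by simpa [LTLPSub] using h :
        ψ = LTLP.orP a φ' ∨ (∃ b ∈ PropSub a, Sum.inl b = Sum.inr ψ) ∨
          Sum.inr ψ ∈ LTLPSub φ') with rfl | ⟨b, _, hb⟩ | h
    · exact fun _ h => h
    · exact absurd hb (by simp)
    · exact (ihφ h).trans ((Set.subset_union_right).trans (Set.subset_insert _ _))
  | next φ' ihφ =>
    rcases (by simpa [LTLPSub] using h :
        ψ = φ'.next ∨ Sum.inr ψ ∈ LTLPSub φ') with rfl | h
    · exact fun _ h => h
    · exact (ihφ h).trans (Set.subset_insert _ _)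
  | glob φ' ihφ =>
    rcases (by simpa [LTLPSub] using h :
        ψ = φ'.glob ∨ Sum.inr ψ ∈ LTLPSub φ') with rfl | h
    · exact fun _ h => h
    · exact (ihφ h).trans (Set.subset_insert _ _)
  | futP a =>
    rcases (by simpa [LTLPSub] using h :
        ψ = LTLP.futP a ∨ ∃ b ∈ PropSub a, Sum.inl b = Sum.inr ψ) with rfl | ⟨b, _, hb⟩
    · exact fun _ h => h
    · exact absurd hb (by simp)
  | untlP φ' a ihφ =>
    rcases (by simpa [LTLPSub] using h :
        ψ = φ'.untlP a ∨ Sum.inr ψ ∈ LTLPSub φ' ∨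
          ∃ b ∈ PropSub a, Sum.inl b = Sum.inr ψ) with rfl | h | ⟨b, _, hb⟩
    · exact fun _ h => h
    · exact (ihφ h).trans ((Set.subset_union_left).trans (Set.subset_insert _ _))
    · exact absurd hb (by simp)

lemma ltlpSub_trans_inl {φ : LTLP P} {a : PropFm P} (h : Sum.inl a ∈ LTLPSub φ) :
    Sum.inl '' PropSub a ⊆ LTLPSub φ := by
  induction φ with
  | ofProp b =>
    rcases (by simpa [LTLPSub] using h :
        ∃ c ∈ PropSub b, Sum.inl c = (Sum.inl a : PropFm P ⊕ LTLP P)) with ⟨c, hc, hca⟩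
    obtain rfl : c = a := by simpa using hca
    exact (Set.image_mono (propSub_trans hc)).trans
      ((by simp [LTLPSub] : Sum.inl '' PropSub b ⊆ LTLPSub (LTLP.ofProp b)))
  | and φ' ψ' ihφ ihψ =>
    rcases (by simpa [LTLPSub] using h :
        Sum.inl a ∈ LTLPSub φ' ∨ Sum.inl a ∈ LTLPSub ψ') with h | h
    · exact (ihφ h).trans ((Set.subset_union_left).trans (Set.subset_insert _ _))
    · exact (ihψ h).trans ((Set.subset_union_right).trans (Set.subset_insert _ _))
  | orP b φ' ihφ =>
    rcases (by simpa [LTLPSub] using h :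
        (∃ c ∈ PropSub b, Sum.inl c = (Sum.inl a : PropFm P ⊕ LTLP P)) ∨ Sum.inl a ∈ LTLPSub φ')
      with ⟨c, hc, hca⟩ | h
    · obtain rfl : c = a := by simpa using hca
      refine (Set.image_mono (propSub_trans hc)).trans ?_
      intro x hx
      simp only [LTLPSub]
      exact Set.mem_insert_of_mem _ (Or.inl hx)
    · exact (ihφ h).trans ((Set.subset_union_right).trans (Set.subset_insert _ _))
  | next φ' ihφ =>
    have h' : Sum.inl a ∈ LTLPSub φ' := by simpa [LTLPSub] using h
    exact (ihφ h').trans (Set.subset_insert _ _)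
  | glob φ' ihφ =>
    have h' : Sum.inl a ∈ LTLPSub φ' := by simpa [LTLPSub] using h
    exact (ihφ h').trans (Set.subset_insert _ _)
  | futP b =>
    rcases (by simpa [LTLPSub] using h :
        ∃ c ∈ PropSub b, Sum.inl c = (Sum.inl a : PropFm P ⊕ LTLP P)) with ⟨c, hc, hca⟩
    obtain rfl : c = a := by simpa using hca
    refine (Set.image_mono (propSub_trans hc)).trans ?_
    intro x hx
    simp only [LTLPSub]
    exact Set.mem_insert_of_mem _ hx
  | untlP φ' b ihφ =>
    rcases (by simpa [LTLPSub] using h :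
        Sum.inr (φ'.untlP b) = Sum.inl a ∨ Sum.inl a ∈ LTLPSub φ' ∨
          ∃ c ∈ PropSub b, Sum.inl c = (Sum.inl a : PropFm P ⊕ LTLP P)) with h | h | ⟨c, hc, hca⟩
    · exact absurd h (by simp)
    · exact (ihφ h).trans ((Set.subset_union_left).trans (Set.subset_insert _ _))
    · obtain rfl : c = a := by simpa using hca
      refine (Set.image_mono (propSub_trans hc)).trans ?_
      intro x hx
      simp only [LTLPSub]
      exact Set.mem_insert_of_mem _ (Or.inr hx)

lemma propSub_finite (a : PropFm P) : (PropSub a).Finite := by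
  induction a with
  | atom p => simp [PropSub]
  | not c ih => exact (ih.insert _)
  | and c d ihc ihd => exact ((ihc.union ihd).insert _)
  | or c d ihc ihd => exact ((ihc.union ihd).insert _)

lemma ltlpSub_finite (φ : LTLP P) : (LTLPSub φ).Finite := by
  induction φ with
  | ofProp a => exact (((propSub_finite a).image _).insert _)
  | and φ' ψ' ihφ ihψ => exact ((ihφ.union ihψ).insert _)
  | orP a φ' ihφ => exact ((((propSub_finite a).image _).union ihφ).insert _)
  | next φ' ihφ => exact (ihφ.insert _)
  | glob φ' ihφ => exact (ihφ.insert _)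
  | futP a => exact (((propSub_finite a).image _).insert _)
  | untlP φ' a ihφ => exact ((ihφ.union ((propSub_finite a).image _)).insert _)

lemma memP_of_propSub {F : LTLPFragment P} {a b : PropFm P} (hF : F.MemP a)
    (h : b ∈ PropSub a) : F.MemP b := by
  induction a with
  | atom p => simp [PropSub] at h; subst h; exact hF
  | not c ih =>
    rcases (by simpa [PropSub] using h : b = c.not ∨ b ∈ PropSub c) with rfl | h
    · exact hF
    · exact ih hF.2 h
  | and c d ihc ihd =>
    rcases (by simpa [PropSub] using h : b = c.and d ∨ b ∈ PropSub c ∨ b ∈ PropSub d)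
      with rfl | h | h
    · exact hF
    · exact ihc hF.2.1 h
    · exact ihd hF.2.2 h
  | or c d ihc ihd =>
    rcases (by simpa [PropSub] using h : b = c.or d ∨ b ∈ PropSub c ∨ b ∈ PropSub d)
      with rfl | h | h
    · exact hF
    · exact ihc hF.2.1 h
    · exact ihd hF.2.2 h

lemma mem_of_ltlpSub {F : LTLPFragment P} {φ : LTLP P} {x : PropFm P ⊕ LTLP P}
    (hF : F.MemF φ) (h : x ∈ LTLPSub φ) :
    (∀ a, x = Sum.inl a → F.MemP a) ∧ (∀ ψ, x = Sum.inr ψ → F.MemF ψ) := by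
  induction φ with
  | ofProp a =>
    rcases (by simpa [LTLPSub] using h :
        x = Sum.inr (LTLP.ofProp a) ∨ ∃ b ∈ PropSub a, Sum.inl b = x) with rfl | ⟨b, hb, rfl⟩
    · refine ⟨by simp, fun ψ hψ => ?_⟩
      obtain rfl : LTLP.ofProp a = ψ := by simpa using hψ
      exact hF
    · refine ⟨fun c hc => ?_, by simp⟩
      obtain rfl : b = c := by simpa using hc
      exact memP_of_propSub hF hb
  | and φ' ψ' ihφ ihψ =>
    rcases (by simpa [LTLPSub] using h :
        x = Sum.inr (φ'.and ψ') ∨ x ∈ LTLPSub φ' ∨ x ∈ LTLPSub ψ') with rfl | h | h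
    · exact ⟨by simp, fun ψ hψ => by obtain rfl : φ'.and ψ' = ψ := by simpa using hψ
                                     exact hF⟩
    · exact ihφ hF.2.1 h
    · exact ihψ hF.2.2 h
  | orP a φ' ihφ =>
    rcases (by simpa [LTLPSub] using h :
        x = Sum.inr (LTLP.orP a φ') ∨ (∃ b ∈ PropSub a, Sum.inl b = x) ∨ x ∈ LTLPSub φ')
      with rfl | ⟨b, hb, rfl⟩ | h
    · exact ⟨by simp, fun ψ hψ => by obtain rfl : LTLP.orP a φ' = ψ := by simpa using hψ
                                     exact hF⟩
    · refine ⟨fun c hc => ?_, by simp⟩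
      obtain rfl : b = c := by simpa using hc
      exact memP_of_propSub hF.2.1 hb
    · exact ihφ hF.2.2 h
  | next φ' ihφ =>
    rcases (by simpa [LTLPSub] using h :
        x = Sum.inr φ'.next ∨ x ∈ LTLPSub φ') with rfl | h
    · exact ⟨by simp, fun ψ hψ => by obtain rfl : φ'.next = ψ := by simpa using hψ
                                     exact hF⟩
    · exact ihφ hF.2 h
  | glob φ' ihφ =>
    rcases (by simpa [LTLPSub] using h :
        x = Sum.inr φ'.glob ∨ x ∈ LTLPSub φ') with rfl | h
    · exact ⟨by simp, fun ψ hψ => by obtain rfl : φ'.glob = ψ := by simpa using hψ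
                                     exact hF⟩
    · exact ihφ hF.2 h
  | futP a =>
    rcases (by simpa [LTLPSub] using h :
        x = Sum.inr (LTLP.futP a) ∨ ∃ b ∈ PropSub a, Sum.inl b = x) with rfl | ⟨b, hb, rfl⟩
    · exact ⟨by simp, fun ψ hψ => by obtain rfl : LTLP.futP a = ψ := by simpa using hψ
                                     exact hF⟩
    · refine ⟨fun c hc => ?_, by simp⟩
      obtain rfl : b = c := by simpa using hc
      exact memP_of_propSub hF.2 hb
  | untlP φ' a ihφ =>
    rcases (by simpa [LTLPSub] using h :
        x = Sum.inr (φ'.untlP a) ∨ x ∈ LTLPSub φ' ∨ ∃ b ∈ PropSub a, Sum.inl b = x)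
      with rfl | h | ⟨b, hb, rfl⟩
    · exact ⟨by simp, fun ψ hψ => by obtain rfl : φ'.untlP a = ψ := by simpa using hψ
                                     exact hF⟩
    · exact ihφ hF.2.1 h
    · refine ⟨fun c hc => ?_, by simp⟩
      obtain rfl : b = c := by simpa using hc
      exact memP_of_propSub hF.2.2 hb

lemma memF_of_ltlpSub {F : LTLPFragment P} {φ ψ : LTLP P} (hF : F.MemF φ)
    (h : Sum.inr ψ ∈ LTLPSub φ) : F.MemF ψ :=
  (mem_of_ltlpSub hF h).2 ψ rfl

lemma memP_of_ltlpSub {F : LTLPFragment P} {φ : LTLP P} {a : PropFm P} (hF : F.MemF φ)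
    (h : Sum.inl a ∈ LTLPSub φ) : F.MemP a :=
  (mem_of_ltlpSub hF h).1 a rfl

end Syn2
section Subst
variable {P : Type}

/-- Substitute `ψ2` for `ψ1` (formula sort). -/
noncomputable def substF (ψ1 ψ2 : LTLP P) : LTLP P → LTLP P
  | .ofProp a => if LTLP.ofProp a = ψ1 then ψ2 else .ofProp a
  | .and α β => if LTLP.and α β = ψ1 then ψ2 else .and (substF ψ1 ψ2 α) (substF ψ1 ψ2 β)
  | .orP a α => if LTLP.orP a α = ψ1 then ψ2 else .orP a (substF ψ1 ψ2 α)
  | .next α => if LTLP.next α = ψ1 then ψ2 else .next (substF ψ1 ψ2 α)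
  | .glob α => if LTLP.glob α = ψ1 then ψ2 else .glob (substF ψ1 ψ2 α)
  | .futP a => if LTLP.futP a = ψ1 then ψ2 else .futP a
  | .untlP α a => if LTLP.untlP α a = ψ1 then ψ2 else .untlP (substF ψ1 ψ2 α) a

/-- Substitute `a2` for `a1` (propositional sort). -/
noncomputable def substP (a1 a2 : PropFm P) : PropFm P → PropFm P
  | .atom p => if PropFm.atom p = a1 then a2 else .atom p
  | .not b => if PropFm.not b = a1 then a2 else .not (substP a1 a2 b)
  | .and b c => if PropFm.and b c = a1 then a2 else .and (substP a1 a2 b) (substP a1 a2 c)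
  | .or b c => if PropFm.or b c = a1 then a2 else .or (substP a1 a2 b) (substP a1 a2 c)

/-- Substitute `a2` for `a1` in all propositional components of a formula. -/
noncomputable def substFP (a1 a2 : PropFm P) : LTLP P → LTLP P
  | .ofProp a => .ofProp (substP a1 a2 a)
  | .and α β => .and (substFP a1 a2 α) (substFP a1 a2 β)
  | .orP a α => .orP (substP a1 a2 a) (substFP a1 a2 α)
  | .next α => .next (substFP a1 a2 α)
  | .glob α => .glob (substFP a1 a2 α)
  | .futP a => .futP (substP a1 a2 a)
  | .untlP α a => .untlP (substFP a1 a2 α) (substP a1 a2 a)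

lemma substF_eq (ψ1 ψ2 : LTLP P) : substF ψ1 ψ2 ψ1 = ψ2 := by
  cases ψ1 <;> simp [substF]

lemma substP_eq (a1 a2 : PropFm P) : substP a1 a2 a1 = a2 := by
  cases a1 <;> simp [substP]

lemma substF_id {ψ1 ψ2 φ : LTLP P} (h : Sum.inr ψ1 ∉ LTLPSub φ) :
    substF ψ1 ψ2 φ = φ := by
  induction φ with
  | ofProp a =>
    have : LTLP.ofProp a ≠ ψ1 := fun he => h (he ▸ LTLPSub_self _)
    simp [substF, this]
  | and α β ihα ihβ =>
    have h1 : LTLP.and α β ≠ ψ1 := fun he => h (he ▸ LTLPSub_self _)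
    have h2 : Sum.inr ψ1 ∉ LTLPSub α := fun hm => h (by simp [LTLPSub]; tauto)
    have h3 : Sum.inr ψ1 ∉ LTLPSub β := fun hm => h (by simp [LTLPSub]; tauto)
    simp [substF, h1, ihα h2, ihβ h3]
  | orP a α ihα =>
    have h1 : LTLP.orP a α ≠ ψ1 := fun he => h (he ▸ LTLPSub_self _)
    have h2 : Sum.inr ψ1 ∉ LTLPSub α := fun hm => h (by simp [LTLPSub]; tauto)
    simp [substF, h1, ihα h2]
  | next α ihα =>
    have h1 : LTLP.next α ≠ ψ1 := fun he => h (he ▸ LTLPSub_self _)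
    have h2 : Sum.inr ψ1 ∉ LTLPSub α := fun hm => h (by simp [LTLPSub]; tauto)
    simp [substF, h1, ihα h2]
  | glob α ihα =>
    have h1 : LTLP.glob α ≠ ψ1 := fun he => h (he ▸ LTLPSub_self _)
    have h2 : Sum.inr ψ1 ∉ LTLPSub α := fun hm => h (by simp [LTLPSub]; tauto)
    simp [substF, h1, ihα h2]
  | futP a =>
    have h1 : LTLP.futP a ≠ ψ1 := fun he => h (he ▸ LTLPSub_self _)
    simp [substF, h1]
  | untlP α a ihα =>
    have h1 : LTLP.untlP α a ≠ ψ1 := fun he => h (he ▸ LTLPSub_self _)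
    have h2 : Sum.inr ψ1 ∉ LTLPSub α := fun hm => h (by simp [LTLPSub]; tauto)
    simp [substF, h1, ihα h2]

lemma substP_id {a1 a2 b : PropFm P} (h : a1 ∉ PropSub b) : substP a1 a2 b = b := by
  induction b with
  | atom p =>
    have : PropFm.atom p ≠ a1 := fun he => h (he ▸ PropSub_self _)
    simp [substP, this]
  | not c ih =>
    have h1 : PropFm.not c ≠ a1 := fun he => h (he ▸ PropSub_self _)
    have h2 : a1 ∉ PropSub c := fun hm => h (by simp [PropSub]; tauto)
    simp [substP, h1, ih h2]
  | and c d ihc ihd =>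
    have h1 : PropFm.and c d ≠ a1 := fun he => h (he ▸ PropSub_self _)
    have h2 : a1 ∉ PropSub c := fun hm => h (by simp [PropSub]; tauto)
    have h3 : a1 ∉ PropSub d := fun hm => h (by simp [PropSub]; tauto)
    simp [substP, h1, ihc h2, ihd h3]
  | or c d ihc ihd =>
    have h1 : PropFm.or c d ≠ a1 := fun he => h (he ▸ PropSub_self _)
    have h2 : a1 ∉ PropSub c := fun hm => h (by simp [PropSub]; tauto)
    have h3 : a1 ∉ PropSub d := fun hm => h (by simp [PropSub]; tauto)
    simp [substP, h1, ihc h2, ihd h3]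

lemma substFP_id {a1 a2 : PropFm P} {φ : LTLP P} (h : Sum.inl a1 ∉ LTLPSub φ) :
    substFP a1 a2 φ = φ := by
  induction φ with
  | ofProp a =>
    have h2 : a1 ∉ PropSub a := fun hm => h (Set.mem_insert_of_mem _ (Set.mem_image_of_mem _ hm))
    simp [substFP, substP_id h2]
  | and α β ihα ihβ =>
    have h2 : Sum.inl a1 ∉ LTLPSub α := fun hm => h (by simp [LTLPSub]; tauto)
    have h3 : Sum.inl a1 ∉ LTLPSub β := fun hm => h (by simp [LTLPSub]; tauto)
    simp [substFP, ihα h2, ihβ h3]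
  | orP a α ihα =>
    have h2 : a1 ∉ PropSub a := fun hm => h (Set.mem_insert_of_mem _ (Set.mem_union_left _ (Set.mem_image_of_mem _ hm)))
    have h3 : Sum.inl a1 ∉ LTLPSub α := fun hm => h (by simp [LTLPSub]; tauto)
    simp [substFP, substP_id h2, ihα h3]
  | next α ihα =>
    have h2 : Sum.inl a1 ∉ LTLPSub α := fun hm => h (by simp [LTLPSub]; tauto)
    simp [substFP, ihα h2]
  | glob α ihα =>
    have h2 : Sum.inl a1 ∉ LTLPSub α := fun hm => h (by simp [LTLPSub]; tauto)
    simp [substFP, ihα h2]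
  | futP a =>
    have h2 : a1 ∉ PropSub a := fun hm => h (Set.mem_insert_of_mem _ (Set.mem_image_of_mem _ hm))
    simp [substFP, substP_id h2]
  | untlP α a ihα =>
    have h2 : Sum.inl a1 ∉ LTLPSub α := fun hm => h (by simp [LTLPSub]; tauto)
    have h3 : a1 ∉ PropSub a := fun hm => h (Set.mem_insert_of_mem _ (Set.mem_union_right _ (Set.mem_image_of_mem _ hm)))
    simp [substFP, ihα h2, substP_id h3]

end Subst
section SubstSem
variable {P : Type}

lemma semF_substF (K : NBKripke P) {ψ1 ψ2 : LTLP P} (h : semF K ψ1 = semF K ψ2)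
    (φ : LTLP P) : semF K (substF ψ1 ψ2 φ) = semF K φ := by
  induction φ with
  | ofProp a =>
    by_cases he : LTLP.ofProp a = ψ1
    · rw [substF, if_pos he, ← h, he]
    · rw [substF, if_neg he]
  | and α β ihα ihβ =>
    by_cases he : LTLP.and α β = ψ1
    · rw [substF, if_pos he, ← h, he]
    · rw [substF, if_neg he, semF_and, semF_and, ihα, ihβ]
  | orP a α ihα =>
    by_cases he : LTLP.orP a α = ψ1
    · rw [substF, if_pos he, ← h, he]
    · rw [substF, if_neg he, semF_orP, semF_orP, ihα]
  | next α ihα =>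
    by_cases he : LTLP.next α = ψ1
    · rw [substF, if_pos he, ← h, he]
    · rw [substF, if_neg he, semF_next, semF_next, ihα]
  | glob α ihα =>
    by_cases he : LTLP.glob α = ψ1
    · rw [substF, if_pos he, ← h, he]
    · rw [substF, if_neg he, semF_glob, semF_glob, ihα]
  | futP a =>
    by_cases he : LTLP.futP a = ψ1
    · rw [substF, if_pos he, ← h, he]
    · rw [substF, if_neg he]
  | untlP α a ihα =>
    by_cases he : LTLP.untlP α a = ψ1
    · rw [substF, if_pos he, ← h, he]
    · rw [substF, if_neg he, semF_untlP, semF_untlP, ihα]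

lemma semP_substP (K : NBKripke P) {a1 a2 : PropFm P} (h : semP K a1 = semP K a2)
    (b : PropFm P) : semP K (substP a1 a2 b) = semP K b := by
  induction b with
  | atom p =>
    by_cases he : PropFm.atom p = a1
    · rw [substP, if_pos he, ← h, he]
    · rw [substP, if_neg he]
  | not c ih =>
    by_cases he : PropFm.not c = a1
    · rw [substP, if_pos he, ← h, he]
    · rw [substP, if_neg he]
      ext q; simp only [semP, PropFm.eval, Set.mem_setOf_eq]
      rw [show (substP a1 a2 c).eval (K.π q) ↔ c.eval (K.π q) from
        Set.ext_iff.mp ih q]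
  | and c d ihc ihd =>
    by_cases he : PropFm.and c d = a1
    · rw [substP, if_pos he, ← h, he]
    · rw [substP, if_neg he]
      ext q; simp only [semP, PropFm.eval, Set.mem_setOf_eq]
      rw [show (substP a1 a2 c).eval (K.π q) ↔ c.eval (K.π q) from Set.ext_iff.mp ihc q,
        show (substP a1 a2 d).eval (K.π q) ↔ d.eval (K.π q) from Set.ext_iff.mp ihd q]
  | or c d ihc ihd =>
    by_cases he : PropFm.or c d = a1
    · rw [substP, if_pos he, ← h, he]
    · rw [substP, if_neg he]
      ext q; simp only [semP, PropFm.eval, Set.mem_setOf_eq]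
      rw [show (substP a1 a2 c).eval (K.π q) ↔ c.eval (K.π q) from Set.ext_iff.mp ihc q,
        show (substP a1 a2 d).eval (K.π q) ↔ d.eval (K.π q) from Set.ext_iff.mp ihd q]

lemma semF_substFP (K : NBKripke P) {a1 a2 : PropFm P} (h : semP K a1 = semP K a2)
    (φ : LTLP P) : semF K (substFP a1 a2 φ) = semF K φ := by
  induction φ with
  | ofProp a => rw [substFP, semF_ofProp, semF_ofProp, semP_substP K h]
  | and α β ihα ihβ => rw [substFP, semF_and, semF_and, ihα, ihβ]
  | orP a α ihα => rw [substFP, semF_orP, semF_orP, ihα, semP_substP K h]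
  | next α ihα => rw [substFP, semF_next, semF_next, ihα]
  | glob α ihα => rw [substFP, semF_glob, semF_glob, ihα]
  | futP a => rw [substFP, semF_futP, semF_futP, semP_substP K h]
  | untlP α a ihα => rw [substFP, semF_untlP, semF_untlP, ihα, semP_substP K h]

lemma memF_substF {F : LTLPFragment P} {ψ1 ψ2 φ : LTLP P} (h2 : F.MemF ψ2)
    (hφ : F.MemF φ) : F.MemF (substF ψ1 ψ2 φ) := by
  induction φ with
  | ofProp a =>
    by_cases he : LTLP.ofProp a = ψ1
    · rw [substF, if_pos he]; exact h2
    · rw [substF, if_neg he]; exact hφ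
  | and α β ihα ihβ =>
    by_cases he : LTLP.and α β = ψ1
    · rw [substF, if_pos he]; exact h2
    · rw [substF, if_neg he]; exact ⟨hφ.1, ihα hφ.2.1, ihβ hφ.2.2⟩
  | orP a α ihα =>
    by_cases he : LTLP.orP a α = ψ1
    · rw [substF, if_pos he]; exact h2
    · rw [substF, if_neg he]; exact ⟨hφ.1, hφ.2.1, ihα hφ.2.2⟩
  | next α ihα =>
    by_cases he : LTLP.next α = ψ1
    · rw [substF, if_pos he]; exact h2
    · rw [substF, if_neg he]; exact ⟨hφ.1, ihα hφ.2⟩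
  | glob α ihα =>
    by_cases he : LTLP.glob α = ψ1
    · rw [substF, if_pos he]; exact h2
    · rw [substF, if_neg he]; exact ⟨hφ.1, ihα hφ.2⟩
  | futP a =>
    by_cases he : LTLP.futP a = ψ1
    · rw [substF, if_pos he]; exact h2
    · rw [substF, if_neg he]; exact hφ
  | untlP α a ihα =>
    by_cases he : LTLP.untlP α a = ψ1
    · rw [substF, if_pos he]; exact h2
    · rw [substF, if_neg he]; exact ⟨hφ.1, ihα hφ.2.1, hφ.2.2⟩

lemma memP_substP {F : LTLPFragment P} {a1 a2 b : PropFm P} (h2 : F.MemP a2)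
    (hb : F.MemP b) : F.MemP (substP a1 a2 b) := by
  induction b with
  | atom p =>
    by_cases he : PropFm.atom p = a1
    · rw [substP, if_pos he]; exact h2
    · rw [substP, if_neg he]; exact hb
  | not c ih =>
    by_cases he : PropFm.not c = a1
    · rw [substP, if_pos he]; exact h2
    · rw [substP, if_neg he]; exact ⟨hb.1, ih hb.2⟩
  | and c d ihc ihd =>
    by_cases he : PropFm.and c d = a1
    · rw [substP, if_pos he]; exact h2
    · rw [substP, if_neg he]; exact ⟨hb.1, ihc hb.2.1, ihd hb.2.2⟩
  | or c d ihc ihd =>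
    by_cases he : PropFm.or c d = a1
    · rw [substP, if_pos he]; exact h2
    · rw [substP, if_neg he]; exact ⟨hb.1, ihc hb.2.1, ihd hb.2.2⟩

lemma memF_substFP {F : LTLPFragment P} {a1 a2 : PropFm P} {φ : LTLP P} (h2 : F.MemP a2)
    (hφ : F.MemF φ) : F.MemF (substFP a1 a2 φ) := by
  induction φ with
  | ofProp a => exact memP_substP h2 hφ
  | and α β ihα ihβ => exact ⟨hφ.1, ihα hφ.2.1, ihβ hφ.2.2⟩
  | orP a α ihα => exact ⟨hφ.1, memP_substP h2 hφ.2.1, ihα hφ.2.2⟩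
  | next α ihα => exact ⟨hφ.1, ihα hφ.2⟩
  | glob α ihα => exact ⟨hφ.1, ihα hφ.2⟩
  | futP a => exact ⟨hφ.1, memP_substP h2 hφ.2⟩
  | untlP α a ihα => exact ⟨hφ.1, ihα hφ.2.1, memP_substP h2 hφ.2.2⟩

end SubstSem
section SubstSub
variable {P : Type}

lemma sub_substF (ψ1 ψ2 : LTLP P) (φ : LTLP P) :
    LTLPSub (substF ψ1 ψ2 φ) ⊆
      (Sum.map id (substF ψ1 ψ2)) '' LTLPSub φ ∪ LTLPSub ψ2 := by
  induction φ with
  | ofProp a =>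
    by_cases he : LTLP.ofProp a = ψ1
    · rw [substF, if_pos he]; exact Set.subset_union_right
    · rw [substF, if_neg he]
      intro x hx
      simp only [LTLPSub, Set.mem_insert_iff] at hx
      rcases hx with rfl | hx
      · exact Or.inl ⟨Sum.inr (LTLP.ofProp a), LTLPSub_self _, by simp [substF, if_neg he]⟩
      · obtain ⟨b, hb, rfl⟩ := hx
        exact Or.inl ⟨Sum.inl b, Set.mem_insert_of_mem _ (Set.mem_image_of_mem _ hb), rfl⟩
  | and α β ihα ihβ =>
    by_cases he : LTLP.and α β = ψ1
    · rw [substF, if_pos he]; exact Set.subset_union_right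
    · rw [substF, if_neg he]
      intro x hx
      simp only [LTLPSub, Set.mem_insert_iff, Set.mem_union] at hx
      rcases hx with rfl | hx | hx
      · exact Or.inl ⟨Sum.inr (LTLP.and α β), LTLPSub_self _, by simp [substF, if_neg he]⟩
      · rcases ihα hx with h | h
        · exact Or.inl (Set.image_mono
            (ltlpSub_trans (Set.mem_insert_of_mem _ (Set.mem_union_left _ (LTLPSub_self α)))) h)
        · exact Or.inr h
      · rcases ihβ hx with h | h
        · exact Or.inl (Set.image_mono
            (ltlpSub_trans (Set.mem_insert_of_mem _ (Set.mem_union_right _ (LTLPSub_self β)))) h)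
        · exact Or.inr h
  | orP a α ihα =>
    by_cases he : LTLP.orP a α = ψ1
    · rw [substF, if_pos he]; exact Set.subset_union_right
    · rw [substF, if_neg he]
      intro x hx
      simp only [LTLPSub, Set.mem_insert_iff, Set.mem_union] at hx
      rcases hx with rfl | hx | hx
      · exact Or.inl ⟨Sum.inr (LTLP.orP a α), LTLPSub_self _, by simp [substF, if_neg he]⟩
      · obtain ⟨b, hb, rfl⟩ := hx
        exact Or.inl ⟨Sum.inl b, Set.mem_insert_of_mem _
          (Set.mem_union_left _ (Set.mem_image_of_mem _ hb)), rfl⟩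
      · rcases ihα hx with h | h
        · exact Or.inl (Set.image_mono
            (ltlpSub_trans (Set.mem_insert_of_mem _ (Set.mem_union_right _ (LTLPSub_self α)))) h)
        · exact Or.inr h
  | next α ihα =>
    by_cases he : LTLP.next α = ψ1
    · rw [substF, if_pos he]; exact Set.subset_union_right
    · rw [substF, if_neg he]
      intro x hx
      simp only [LTLPSub, Set.mem_insert_iff] at hx
      rcases hx with rfl | hx
      · exact Or.inl ⟨Sum.inr (LTLP.next α), LTLPSub_self _, by simp [substF, if_neg he]⟩
      · rcases ihα hx with h | h
        · exact Or.inl (Set.image_mono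
            (ltlpSub_trans (Set.mem_insert_of_mem _ (LTLPSub_self α))) h)
        · exact Or.inr h
  | glob α ihα =>
    by_cases he : LTLP.glob α = ψ1
    · rw [substF, if_pos he]; exact Set.subset_union_right
    · rw [substF, if_neg he]
      intro x hx
      simp only [LTLPSub, Set.mem_insert_iff] at hx
      rcases hx with rfl | hx
      · exact Or.inl ⟨Sum.inr (LTLP.glob α), LTLPSub_self _, by simp [substF, if_neg he]⟩
      · rcases ihα hx with h | h
        · exact Or.inl (Set.image_mono
            (ltlpSub_trans (Set.mem_insert_of_mem _ (LTLPSub_self α))) h)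
        · exact Or.inr h
  | futP a =>
    by_cases he : LTLP.futP a = ψ1
    · rw [substF, if_pos he]; exact Set.subset_union_right
    · rw [substF, if_neg he]
      intro x hx
      simp only [LTLPSub, Set.mem_insert_iff] at hx
      rcases hx with rfl | hx
      · exact Or.inl ⟨Sum.inr (LTLP.futP a), LTLPSub_self _, by simp [substF, if_neg he]⟩
      · obtain ⟨b, hb, rfl⟩ := hx
        exact Or.inl ⟨Sum.inl b, Set.mem_insert_of_mem _ (Set.mem_image_of_mem _ hb), rfl⟩
  | untlP α a ihα =>
    by_cases he : LTLP.untlP α a = ψ1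
    · rw [substF, if_pos he]; exact Set.subset_union_right
    · rw [substF, if_neg he]
      intro x hx
      simp only [LTLPSub, Set.mem_insert_iff, Set.mem_union] at hx
      rcases hx with rfl | hx | hx
      · exact Or.inl ⟨Sum.inr (LTLP.untlP α a), LTLPSub_self _, by simp [substF, if_neg he]⟩
      · rcases ihα hx with h | h
        · exact Or.inl (Set.image_mono
            (ltlpSub_trans (Set.mem_insert_of_mem _ (Set.mem_union_left _ (LTLPSub_self α)))) h)
        · exact Or.inr h
      · obtain ⟨b, hb, rfl⟩ := hx
        exact Or.inl ⟨Sum.inl b, Set.mem_insert_of_mem _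
          (Set.mem_union_right _ (Set.mem_image_of_mem _ hb)), rfl⟩

lemma sub_substP (a1 a2 : PropFm P) (b : PropFm P) :
    PropSub (substP a1 a2 b) ⊆ (substP a1 a2) '' PropSub b ∪ PropSub a2 := by
  induction b with
  | atom p =>
    by_cases he : PropFm.atom p = a1
    · rw [substP, if_pos he]; exact Set.subset_union_right
    · rw [substP, if_neg he]
      intro x hx
      simp only [PropSub, Set.mem_singleton_iff] at hx
      subst hx
      exact Or.inl ⟨.atom p, PropSub_self _, by simp [substP, if_neg he]⟩
  | not c ih =>
    by_cases he : PropFm.not c = a1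
    · rw [substP, if_pos he]; exact Set.subset_union_right
    · rw [substP, if_neg he]
      intro x hx
      simp only [PropSub, Set.mem_insert_iff] at hx
      rcases hx with rfl | hx
      · exact Or.inl ⟨.not c, PropSub_self _, by simp [substP, if_neg he]⟩
      · rcases ih hx with h | h
        · exact Or.inl (Set.image_mono
            (propSub_trans (Set.mem_insert_of_mem _ (PropSub_self c))) h)
        · exact Or.inr h
  | and c d ihc ihd =>
    by_cases he : PropFm.and c d = a1
    · rw [substP, if_pos he]; exact Set.subset_union_right
    · rw [substP, if_neg he]
      intro x hx
      simp only [PropSub, Set.mem_insert_iff, Set.mem_union] at hx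
      rcases hx with rfl | hx | hx
      · exact Or.inl ⟨.and c d, PropSub_self _, by simp [substP, if_neg he]⟩
      · rcases ihc hx with h | h
        · exact Or.inl (Set.image_mono
            (propSub_trans (Set.mem_insert_of_mem _ (Set.mem_union_left _ (PropSub_self c)))) h)
        · exact Or.inr h
      · rcases ihd hx with h | h
        · exact Or.inl (Set.image_mono
            (propSub_trans (Set.mem_insert_of_mem _ (Set.mem_union_right _ (PropSub_self d)))) h)
        · exact Or.inr h
  | or c d ihc ihd =>
    by_cases he : PropFm.or c d = a1
    · rw [substP, if_pos he]; exact Set.subset_union_right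
    · rw [substP, if_neg he]
      intro x hx
      simp only [PropSub, Set.mem_insert_iff, Set.mem_union] at hx
      rcases hx with rfl | hx | hx
      · exact Or.inl ⟨.or c d, PropSub_self _, by simp [substP, if_neg he]⟩
      · rcases ihc hx with h | h
        · exact Or.inl (Set.image_mono
            (propSub_trans (Set.mem_insert_of_mem _ (Set.mem_union_left _ (PropSub_self c)))) h)
        · exact Or.inr h
      · rcases ihd hx with h | h
        · exact Or.inl (Set.image_mono
            (propSub_trans (Set.mem_insert_of_mem _ (Set.mem_union_right _ (PropSub_self d)))) h)
        · exact Or.inr h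

lemma himg_aux (a1 a2 : PropFm P) (a : PropFm P) (T : Set (PropFm P ⊕ LTLP P))
    (ha : ∀ b ∈ PropSub a, Sum.inl b ∈ T) :
    Sum.inl '' PropSub (substP a1 a2 a) ⊆
      (Sum.map (substP a1 a2) (substFP a1 a2)) '' T ∪ Sum.inl '' PropSub a2 := by
  intro x hx
  obtain ⟨c, hc, rfl⟩ := hx
  rcases sub_substP a1 a2 a hc with ⟨b, hb, rfl⟩ | h
  · exact Or.inl ⟨Sum.inl b, ha b hb, rfl⟩
  · exact Or.inr (Set.mem_image_of_mem _ h)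

lemma sub_substFP (a1 a2 : PropFm P) (φ : LTLP P) :
    LTLPSub (substFP a1 a2 φ) ⊆
      (Sum.map (substP a1 a2) (substFP a1 a2)) '' LTLPSub φ ∪ Sum.inl '' PropSub a2 := by
  induction φ with
  | ofProp a =>
    intro x hx
    simp only [substFP, LTLPSub, Set.mem_insert_iff] at hx
    rcases hx with rfl | hx
    · exact Or.inl ⟨Sum.inr (LTLP.ofProp a), LTLPSub_self _, rfl⟩
    · exact himg_aux a1 a2 a _ (fun b hb => Set.mem_insert_of_mem _ (Set.mem_image_of_mem _ hb)) hx
  | and α β ihα ihβ =>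
    intro x hx
    simp only [substFP, LTLPSub, Set.mem_insert_iff, Set.mem_union] at hx
    rcases hx with rfl | hx | hx
    · exact Or.inl ⟨Sum.inr (LTLP.and α β), LTLPSub_self _, rfl⟩
    · rcases ihα hx with h | h
      · exact Or.inl (Set.image_mono
          (ltlpSub_trans (Set.mem_insert_of_mem _ (Set.mem_union_left _ (LTLPSub_self α)))) h)
      · exact Or.inr h
    · rcases ihβ hx with h | h
      · exact Or.inl (Set.image_mono
          (ltlpSub_trans (Set.mem_insert_of_mem _ (Set.mem_union_right _ (LTLPSub_self β)))) h)
      · exact Or.inr h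
  | orP a α ihα =>
    intro x hx
    simp only [substFP, LTLPSub, Set.mem_insert_iff, Set.mem_union] at hx
    rcases hx with rfl | hx | hx
    · exact Or.inl ⟨Sum.inr (LTLP.orP a α), LTLPSub_self _, rfl⟩
    · exact himg_aux a1 a2 a _ (fun b hb => Set.mem_insert_of_mem _
        (Set.mem_union_left _ (Set.mem_image_of_mem _ hb))) hx
    · rcases ihα hx with h | h
      · exact Or.inl (Set.image_mono
          (ltlpSub_trans (Set.mem_insert_of_mem _ (Set.mem_union_right _ (LTLPSub_self α)))) h)
      · exact Or.inr h
  | next α ihα =>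
    intro x hx
    simp only [substFP, LTLPSub, Set.mem_insert_iff] at hx
    rcases hx with rfl | hx
    · exact Or.inl ⟨Sum.inr (LTLP.next α), LTLPSub_self _, rfl⟩
    · rcases ihα hx with h | h
      · exact Or.inl (Set.image_mono
          (ltlpSub_trans (Set.mem_insert_of_mem _ (LTLPSub_self α))) h)
      · exact Or.inr h
  | glob α ihα =>
    intro x hx
    simp only [substFP, LTLPSub, Set.mem_insert_iff] at hx
    rcases hx with rfl | hx
    · exact Or.inl ⟨Sum.inr (LTLP.glob α), LTLPSub_self _, rfl⟩
    · rcases ihα hx with h | h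
      · exact Or.inl (Set.image_mono
          (ltlpSub_trans (Set.mem_insert_of_mem _ (LTLPSub_self α))) h)
      · exact Or.inr h
  | futP a =>
    intro x hx
    simp only [substFP, LTLPSub, Set.mem_insert_iff] at hx
    rcases hx with rfl | hx
    · exact Or.inl ⟨Sum.inr (LTLP.futP a), LTLPSub_self _, rfl⟩
    · exact himg_aux a1 a2 a _ (fun b hb => Set.mem_insert_of_mem _ (Set.mem_image_of_mem _ hb)) hx
  | untlP α a ihα =>
    intro x hx
    simp only [substFP, LTLPSub, Set.mem_insert_iff, Set.mem_union] at hx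
    rcases hx with rfl | hx | hx
    · exact Or.inl ⟨Sum.inr (LTLP.untlP α a), LTLPSub_self _, rfl⟩
    · rcases ihα hx with h | h
      · exact Or.inl (Set.image_mono
          (ltlpSub_trans (Set.mem_insert_of_mem _ (Set.mem_union_left _ (LTLPSub_self α)))) h)
      · exact Or.inr h
    · exact himg_aux a1 a2 a _ (fun b hb => Set.mem_insert_of_mem _
        (Set.mem_union_right _ (Set.mem_image_of_mem _ hb))) hx

end SubstSub
section Count
variable {P : Type}

lemma fixed_substF {ψ1 ψ2 : LTLP P} (h : Sum.inr ψ1 ∉ LTLPSub ψ2) :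
    LTLPSub ψ2 ⊆ Sum.map id (substF ψ1 ψ2) '' LTLPSub ψ2 := by
  intro x hx
  refine ⟨x, hx, ?_⟩
  cases x with
  | inl b => rfl
  | inr χ => simp [substF_id (fun hm => h (ltlpSub_trans hx hm))]

lemma fixed_substFP {a1 a2 : PropFm P} (h : a1 ∉ PropSub a2) :
    Sum.inl '' PropSub a2 ⊆
      Sum.map (substP a1 a2) (substFP a1 a2) '' (Sum.inl '' PropSub a2) := by
  rintro _ ⟨b, hb, rfl⟩
  refine ⟨Sum.inl b, ⟨b, hb, rfl⟩, ?_⟩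
  simp [substP_id (fun hm => h (propSub_trans hb hm))]

lemma ncard_glue {α β : Type*} {S : Set α} (hS : S.Finite) (f : α → β) {x y : α}
    (hx : x ∈ S) (hy : y ∈ S) (hxy : x ≠ y) (hf : f x = f y) {T : Set β}
    (hT : T ⊆ f '' S) : T.ncard < S.ncard := by
  have h1 : f '' S ⊆ f '' (S \ {x}) := by
    rintro _ ⟨z, hz, rfl⟩
    by_cases hzx : z = x
    · subst hzx; exact ⟨y, ⟨hy, by simp [Ne.symm hxy]⟩, hf.symm⟩
    · exact ⟨z, ⟨hz, by simp [hzx]⟩, rfl⟩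
  calc T.ncard ≤ (f '' (S \ {x})).ncard :=
        Set.ncard_le_ncard (hT.trans h1) (hS.diff.image f)
    _ ≤ (S \ {x}).ncard := Set.ncard_image_le hS.diff
    _ < S.ncard := Set.ncard_diff_singleton_lt_of_mem hx hS

lemma SP_finite (φ : LTLP P) : {a : PropFm P | Sum.inl a ∈ LTLPSub φ}.Finite :=
  Set.Finite.preimage Sum.inl_injective.injOn (ltlpSub_finite φ)

lemma SF_finite (φ : LTLP P) : {ψ : LTLP P | Sum.inr ψ ∈ LTLPSub φ}.Finite :=
  Set.Finite.preimage Sum.inr_injective.injOn (ltlpSub_finite φ)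

lemma ncard_sub_le (φ : LTLP P) :
    (LTLPSub φ).ncard ≤ {a : PropFm P | Sum.inl a ∈ LTLPSub φ}.ncard +
      {ψ : LTLP P | Sum.inr ψ ∈ LTLPSub φ}.ncard := by
  have hsub : LTLPSub φ ⊆
      Sum.inl '' {a : PropFm P | Sum.inl a ∈ LTLPSub φ} ∪
      Sum.inr '' {ψ : LTLP P | Sum.inr ψ ∈ LTLPSub φ} := by
    intro x hx
    cases x with
    | inl a => exact Or.inl ⟨a, hx, rfl⟩
    | inr ψ => exact Or.inr ⟨ψ, hx, rfl⟩
  calc (LTLPSub φ).ncard ≤ _ := Set.ncard_le_ncard hsub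
        (((SP_finite φ).image _).union ((SF_finite φ).image _))
    _ ≤ (Sum.inl '' {a : PropFm P | Sum.inl a ∈ LTLPSub φ}).ncard +
        (Sum.inr '' {ψ : LTLP P | Sum.inr ψ ∈ LTLPSub φ}).ncard :=
        Set.ncard_union_le _ _
    _ = _ := by
        rw [Set.ncard_image_of_injective _ Sum.inl_injective,
          Set.ncard_image_of_injective _ Sum.inr_injective]

lemma exists_pair {α V : Type*} [Fintype V] {S : Set α} (hS : S.Finite) (f : α → V)
    (h : Fintype.card V < S.ncard) : ∃ x ∈ S, ∃ y ∈ S, x ≠ y ∧ f x = f y := by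
  have hc : (Finset.univ : Finset V).card < hS.toFinset.card := by
    rwa [Finset.card_univ, ← Set.ncard_eq_toFinset_card _ hS]
  obtain ⟨x, hx, y, hy, hxy, hf⟩ :=
    Finset.exists_ne_map_eq_of_card_lt_of_maps_to hc (fun a _ => Finset.mem_univ (f a))
  exact ⟨x, hS.mem_toFinset.mp hx, y, hS.mem_toFinset.mp hy, hxy, hf⟩

lemma card_V (S : Finset (NBKripke P)) :
    Fintype.card (∀ K : {K : NBKripke P // K ∈ S}, Set K.1.Q) =
      2 ^ (∑ K ∈ S, Fintype.card K.Q) := by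
  rw [Fintype.card_pi]
  calc ∏ K : {K : NBKripke P // K ∈ S}, Fintype.card (Set K.1.Q)
      = ∏ K : {K : NBKripke P // K ∈ S}, 2 ^ Fintype.card K.1.Q :=
        Finset.prod_congr rfl (fun K _ => Fintype.card_set)
    _ = 2 ^ ∑ K : {K : NBKripke P // K ∈ S}, Fintype.card K.1.Q :=
        Finset.prod_pow_eq_pow_sum _ _ _
    _ = 2 ^ ∑ K ∈ S, Fintype.card K.Q := by
        rw [Finset.sum_coe_sort S (fun K => Fintype.card K.Q)]

end Count
section Main
variable {P : Type}

lemma step_lemma (F : LTLPFragment P) (S : Finset (NBKripke P)) (φ : LTLP P)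
    (hmem : F.MemF φ)
    (hsz : 2 ^ ((∑ K ∈ S, Fintype.card K.Q) + 1) < LTLPsz φ) :
    ∃ φ' : LTLP P, LTLPsz φ' < LTLPsz φ ∧ F.MemF φ' ∧
      (∀ K ∈ S, semF K φ' = semF K φ) := by
  set n := ∑ K ∈ S, Fintype.card K.Q with hn
  have hsplit : 2 ^ n < {a : PropFm P | Sum.inl a ∈ LTLPSub φ}.ncard ∨
      2 ^ n < {ψ : LTLP P | Sum.inr ψ ∈ LTLPSub φ}.ncard := by
    by_contra hc
    push_neg at hc
    have := ncard_sub_le φ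
    have hps : 2 ^ (n + 1) = 2 ^ n + 2 ^ n := by rw [pow_succ]; ring
    unfold LTLPsz at hsz
    omega
  rcases hsplit with hcase | hcase
  · -- two propositional subformulas with equal semantics on all of S
    obtain ⟨a, ha, b, hb, hab, hfab⟩ := exists_pair (SP_finite φ)
      (fun a (K : {K : NBKripke P // K ∈ S}) => semP K.1 a) (by rw [card_V]; exact hcase)
    have hsem : ∀ K ∈ S, semP K a = semP K b := fun K hK => congrFun hfab ⟨K, hK⟩
    have key : ∀ a1 a2 : PropFm P, a1 ≠ a2 → Sum.inl a1 ∈ LTLPSub φ →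
        Sum.inl a2 ∈ LTLPSub φ → (∀ K ∈ S, semP K a1 = semP K a2) →
        a1 ∉ PropSub a2 →
        ∃ φ' : LTLP P, LTLPsz φ' < LTLPsz φ ∧ F.MemF φ' ∧
          (∀ K ∈ S, semF K φ' = semF K φ) := by
      intro a1 a2 hne h1 h2 hsem12 hnot
      refine ⟨substFP a1 a2 φ, ?_, ?_, ?_⟩
      · have himg : LTLPSub (substFP a1 a2 φ) ⊆
            Sum.map (substP a1 a2) (substFP a1 a2) '' LTLPSub φ := by
          refine (sub_substFP a1 a2 φ).trans (Set.union_subset Set.Subset.rfl ?_)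
          exact (fixed_substFP hnot).trans (Set.image_mono (ltlpSub_trans_inl h2))
        have hxy : (Sum.inl a1 : PropFm P ⊕ LTLP P) ≠ Sum.inl a2 :=
          fun hcon => hne (Sum.inl.inj hcon)
        have hfeq : Sum.map (substP a1 a2) (substFP a1 a2) (Sum.inl a1) =
            Sum.map (substP a1 a2) (substFP a1 a2) (Sum.inl a2) := by
          simp [Sum.map, substP_eq, substP_id hnot]
        exact ncard_glue (ltlpSub_finite φ) _ h1 h2 hxy hfeq himg
      · exact memF_substFP (memP_of_ltlpSub hmem h2) hmem
      · exact fun K hK => semF_substFP K (hsem12 K hK) φ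
    by_cases hdir : a ∈ PropSub b
    · refine key b a (Ne.symm hab) hb ha (fun K hK => (hsem K hK).symm) ?_
      intro hrev
      rcases propSub_size hdir with rfl | h1
      · exact hab rfl
      rcases propSub_size hrev with rfl | h2
      · exact hab rfl
      omega
    · exact key a b hab ha hb hsem hdir
  · -- two formula-sort subformulas with equal semantics on all of S
    obtain ⟨a, ha, b, hb, hab, hfab⟩ := exists_pair (SF_finite φ)
      (fun ψ (K : {K : NBKripke P // K ∈ S}) => semF K.1 ψ) (by rw [card_V]; exact hcase)
    have hsem : ∀ K ∈ S, semF K a = semF K b := fun K hK => congrFun hfab ⟨K, hK⟩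
    have key : ∀ ψ1 ψ2 : LTLP P, ψ1 ≠ ψ2 → Sum.inr ψ1 ∈ LTLPSub φ →
        Sum.inr ψ2 ∈ LTLPSub φ → (∀ K ∈ S, semF K ψ1 = semF K ψ2) →
        Sum.inr ψ1 ∉ LTLPSub ψ2 →
        ∃ φ' : LTLP P, LTLPsz φ' < LTLPsz φ ∧ F.MemF φ' ∧
          (∀ K ∈ S, semF K φ' = semF K φ) := by
      intro ψ1 ψ2 hne h1 h2 hsem12 hnot
      refine ⟨substF ψ1 ψ2 φ, ?_, ?_, ?_⟩
      · have himg : LTLPSub (substF ψ1 ψ2 φ) ⊆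
            Sum.map id (substF ψ1 ψ2) '' LTLPSub φ := by
          refine (sub_substF ψ1 ψ2 φ).trans (Set.union_subset Set.Subset.rfl ?_)
          exact (fixed_substF hnot).trans (Set.image_mono (ltlpSub_trans h2))
        have hxy : (Sum.inr ψ1 : PropFm P ⊕ LTLP P) ≠ Sum.inr ψ2 :=
          fun hcon => hne (Sum.inr.inj hcon)
        have hfeq : Sum.map (id : PropFm P → PropFm P) (substF ψ1 ψ2) (Sum.inr ψ1) =
            Sum.map (id : PropFm P → PropFm P) (substF ψ1 ψ2) (Sum.inr ψ2) := by
          simp [Sum.map, substF_eq, substF_id hnot]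
        exact ncard_glue (ltlpSub_finite φ) _ h1 h2 hxy hfeq himg
      · exact memF_substF (memF_of_ltlpSub hmem h2) hmem
      · exact fun K hK => semF_substF K (hsem12 K hK) φ
    by_cases hdir : Sum.inr a ∈ LTLPSub b
    · refine key b a (Ne.symm hab) hb ha (fun K hK => (hsem K hK).symm) ?_
      intro hrev
      rcases ltlpSub_size hdir with heq | h1
      · exact hab (by simpa using heq)
      rcases ltlpSub_size hrev with heq | h2
      · exact hab (Eq.symm (by simpa using heq))
      simp only [wsize] at h1 h2
      omega
    · exact key a b hab ha hb hsem hdir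

end Main
/-- **Corollary.** For any fragment of `LTL_P(Prop)` and any sample `(Pos, Neg)` of
actionless non-blocking Kripke structures: if some fragment formula separates the
sample, then one of size at most `2^(n+1)` does, where `n` is the total number of
states of the sample. -/
theorem ltlp_separating_size (P : Type) [Finite P] (hP : Nonempty P)
    (F : LTLPFragment P) (Pos Neg : Finset (NBKripke P)) :
    (∃ φ : LTLP P, F.MemF φ ∧
        (∀ K ∈ Pos, KSat K φ.toLTL) ∧ (∀ K ∈ Neg, ¬ KSat K φ.toLTL)) →
    ∃ φ : LTLP P, F.MemF φ ∧
        (∀ K ∈ Pos, KSat K φ.toLTL) ∧ (∀ K ∈ Neg, ¬ KSat K φ.toLTL) ∧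
        LTLPsz φ ≤ 2 ^ ((∑ K ∈ Pos ∪ Neg, Fintype.card K.Q) + 1) := by
  rintro ⟨φ0, hmem0, hpos0, hneg0⟩
  have main : ∀ N : ℕ, ∀ φ : LTLP P, LTLPsz φ ≤ N → F.MemF φ →
      (∀ K ∈ Pos, KSat K φ.toLTL) → (∀ K ∈ Neg, ¬ KSat K φ.toLTL) →
      ∃ φ' : LTLP P, F.MemF φ' ∧ (∀ K ∈ Pos, KSat K φ'.toLTL) ∧
        (∀ K ∈ Neg, ¬ KSat K φ'.toLTL) ∧
        LTLPsz φ' ≤ 2 ^ ((∑ K ∈ Pos ∪ Neg, Fintype.card K.Q) + 1) := by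
    intro N
    induction N with
    | zero =>
      intro φ h hm hp hn
      exact ⟨φ, hm, hp, hn, le_trans h (Nat.zero_le _)⟩
    | succ N ih =>
      intro φ h hm hp hn
      by_cases hb : LTLPsz φ ≤ 2 ^ ((∑ K ∈ Pos ∪ Neg, Fintype.card K.Q) + 1)
      · exact ⟨φ, hm, hp, hn, hb⟩
      · obtain ⟨φ', hlt, hm', hsem⟩ := step_lemma F (Pos ∪ Neg) φ hm (lt_of_not_ge hb)
        refine ih φ' (by omega) hm' ?_ ?_
        · intro K hK
          have hKS : K ∈ Pos ∪ Neg := Finset.mem_union_left _ hK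
          rw [KSat_iff, hsem K hKS]
          exact (KSat_iff K φ).mp (hp K hK)
        · intro K hK hKsat
          have hKS : K ∈ Pos ∪ Neg := Finset.mem_union_right _ hK
          apply hn K hK
          rw [KSat_iff] at hKsat ⊢
          rwa [hsem K hKS] at hKsat
  exact main (LTLPsz φ0) φ0 le_rfl hmem0 hpos0 hneg0
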